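/- Let ε > 0 and ᾱ > 0 satisfy 0 ≤ α ≤ ᾱ < 1 − ε, let 0 ≤ L ≤ λ for some λ > 0, and let 0 ≤ β ≤ β̄ with β̄ > 0. Set δ* = ((ᾱ + 2β̄)/(2(1 − ε − ᾱ)))·λ and τ* = ((1 + ε)δ* + (1 + β)L)/(2 − α). Then τ*(2 − α) − (1 + β)L − δ* = ε·δ* and δ* − τ*·α − L·β ≥ ε·δ*. -/
import Mathlib


/-- convex-case parameter lemma.
If `ε > 0`, `0 < ᾱ`, `0 ≤ α ≤ ᾱ < 1 − ε`, `0 ≤ L ≤ λ` with `λ > 0`,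
`0 ≤ β ≤ β̄` with `β̄ > 0`, `δ* = ((ᾱ+2β̄)/(2(1−ε−ᾱ)))·λ` and
`τ* = ((1+ε)δ* + (1+β)L)/(2−α)`, then `τ*(2−α) − (1+β)L − δ* = ε·δ*` and
`δ* − τ*·α − L·β ≥ ε·δ*`. -/
theorem stmt_4 (ε αbar α β βbar L lam δstar τstar : ℝ)
    (hε : 0 < ε) (hαbar : 0 < αbar)
    (hα0 : 0 ≤ α) (hααbar : α ≤ αbar) (hαbarlt : αbar < 1 - ε)
    (hL0 : 0 ≤ L) (hLlam : L ≤ lam) (hlam : 0 < lam)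
    (hβ0 : 0 ≤ β) (hββbar : β ≤ βbar) (hβbar : 0 < βbar)
    (hδ : δstar = (αbar + 2 * βbar) / (2 * (1 - ε - αbar)) * lam)
    (hτ : τstar = ((1 + ε) * δstar + (1 + β) * L) / (2 - α)) :
    τstar * (2 - α) - (1 + β) * L - δstar = ε * δstar ∧
      δstar - τstar * α - L * β ≥ ε * δstar := by
  have h2α : (0:ℝ) < 2 - α := by linarith
  have hd : (0:ℝ) < 1 - ε - αbar := by linarith
  have hδ' : δstar * (2 * (1 - ε - αbar)) = (αbar + 2 * βbar) * lam := by
    rw [hδ]; field_simp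
  have hδpos : 0 ≤ δstar := by nlinarith
  have hτ' : τstar * (2 - α) = (1 + ε) * δstar + (1 + β) * L := by
    rw [hτ]; field_simp
  constructor
  · linarith
  · have hkey : (α + 2 * β) * L ≤ (αbar + 2 * βbar) * lam := by nlinarith
    have h1 : 0 ≤ δstar * (αbar - α) := mul_nonneg hδpos (by linarith)
    nlinarith [mul_pos h2α hd, sq_nonneg (2 - α)]
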